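/- arXiv:2411.06295 — 2 statements merged into one kernel-verified Lean document; each statement's English description precedes it below -/
import Mathlib

section
/- Characterization of the ForwardPush invariant: vectors p, r ∈ ℝ^V satisfy the ForwardPush invariant with respect to s (i.e., π_s(w) = p(w) + Σ_{x∈V} r(x)·π_x(w) for every w ∈ V) if and only if α·(e_s − r) = (I − (1−α)·Wᵀ)·p. -/
open Matrix

/-- The random-walk transition matrix `W = D⁻¹ A` of a finite simple graph,
with entries `W i j = A i j / d(i)`. -/
noncomputable def walkMatrix {V : Type*} [Fintype V] [DecidableEq V]
    (G : SimpleGraph V) [DecidableRel G.Adj] : Matrix V V ℝ :=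
  (Matrix.diagonal fun i => ((G.degree i : ℝ))⁻¹) * G.adjMatrix ℝ

lemma walk_apply {V : Type*} [Fintype V] [DecidableEq V]
    (G : SimpleGraph V) [DecidableRel G.Adj] (i j : V) :
    walkMatrix G i j = ((G.degree i : ℝ))⁻¹ * G.adjMatrix ℝ i j := by
  rw [walkMatrix, Matrix.diagonal_mul]

lemma walk_nonneg {V : Type*} [Fintype V] [DecidableEq V]
    (G : SimpleGraph V) [DecidableRel G.Adj] (i j : V) :
    0 ≤ walkMatrix G i j := by
  rw [walk_apply]
  refine mul_nonneg (by positivity) ?_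
  rw [SimpleGraph.adjMatrix_apply]
  split <;> norm_num

lemma walk_row_sum {V : Type*} [Fintype V] [DecidableEq V]
    (G : SimpleGraph V) [DecidableRel G.Adj] (hd : ∀ u : V, 0 < G.degree u) (i : V) :
    ∑ j, walkMatrix G i j = 1 := by
  have h : ∑ j, (G.adjMatrix ℝ) i j = (G.degree i : ℝ) := by
    have := G.adjMatrix_mulVec_const_apply (α := ℝ) (a := 1) (v := i)
    simpa [Matrix.mulVec, dotProduct] using this
  simp only [walk_apply, ← Finset.mul_sum, h]
  have : (G.degree i : ℝ) ≠ 0 := Nat.cast_ne_zero.mpr (hd i).ne'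
  field_simp

lemma M_mulVec {V : Type*} [Fintype V] [DecidableEq V]
    (G : SimpleGraph V) [DecidableRel G.Adj] (α : ℝ) (v : V → ℝ) :
    ((1 : Matrix V V ℝ) - (1 - α) • (walkMatrix G)ᵀ) *ᵥ v
      = v - (1 - α) • ((walkMatrix G)ᵀ *ᵥ v) := by
  rw [Matrix.sub_mulVec, Matrix.one_mulVec, Matrix.smul_mulVec]

lemma M_inj {V : Type*} [Fintype V] [DecidableEq V]
    (G : SimpleGraph V) [DecidableRel G.Adj]
    (hd : ∀ u : V, 0 < G.degree u)
    (α : ℝ) (hα : α ∈ Set.Ioo (0 : ℝ) 1) (v : V → ℝ)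
    (h : ((1 : Matrix V V ℝ) - (1 - α) • (walkMatrix G)ᵀ) *ᵥ v = 0) :
    v = 0 := by
  rw [M_mulVec, sub_eq_zero] at h
  have hv : ∀ w, v w = (1 - α) * ∑ u, walkMatrix G u w * v u := by
    intro w
    have := congrFun h w
    simpa [Matrix.mulVec, dotProduct, Matrix.transpose_apply] using this
  set S := ∑ w, |v w| with hS
  have hSnn : 0 ≤ S := Finset.sum_nonneg fun w _ => abs_nonneg _
  have hbound : S ≤ (1 - α) * S := by
    calc S ≤ ∑ w, (1 - α) * ∑ u, walkMatrix G u w * |v u| := by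
            refine Finset.sum_le_sum fun w _ => ?_
            rw [hv w, abs_mul, abs_of_nonneg (by linarith [hα.2])]
            refine mul_le_mul_of_nonneg_left ?_ (by linarith [hα.2])
            refine (Finset.abs_sum_le_sum_abs _ _).trans ?_
            refine Finset.sum_le_sum fun u _ => ?_
            rw [abs_mul, abs_of_nonneg (walk_nonneg G u w)]
      _ = (1 - α) * ∑ u, (∑ w, walkMatrix G u w) * |v u| := by
            rw [← Finset.mul_sum, Finset.sum_comm]
            congr 1
            refine Finset.sum_congr rfl fun u _ => ?_
            rw [Finset.sum_mul]
      _ = (1 - α) * S := by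
            congr 1
            refine Finset.sum_congr rfl fun u _ => ?_
            rw [walk_row_sum G hd u, one_mul]
  have hS0 : S = 0 := by nlinarith [hα.1]
  funext w
  have := (Finset.sum_eq_zero_iff_of_nonneg (fun w _ => abs_nonneg (v w))).mp hS0 w (Finset.mem_univ w)
  simpa [abs_eq_zero] using this

/-- Characterization of the ForwardPush invariant: vectors `p, r` satisfy the ForwardPush
invariant with respect to `s` (i.e. `π_s(w) = p(w) + ∑_x r(x)·π_x(w)` for every `w`) if and
only if `α·(e_s − r) = (I − (1−α)·Wᵀ)·p`. -/
theorem forwardpush_invariant_iff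
    {V : Type*} [Fintype V] [DecidableEq V]
    (G : SimpleGraph V) [DecidableRel G.Adj]
    (hd : ∀ u : V, 0 < G.degree u)
    (α : ℝ) (hα : α ∈ Set.Ioo (0 : ℝ) 1)
    (π : V → V → ℝ)
    (hπ : ∀ s : V,
      π s = α • (Pi.single s 1 : V → ℝ) + (1 - α) • ((walkMatrix G)ᵀ *ᵥ π s))
    (s : V) (p r : V → ℝ) :
    (∀ w : V, π s w = p w + ∑ x : V, r x * π x w) ↔
      α • ((Pi.single s 1 : V → ℝ) - r) =
        ((1 : Matrix V V ℝ) - (1 - α) • (walkMatrix G)ᵀ) *ᵥ p := by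
  set M : Matrix V V ℝ := (1 : Matrix V V ℝ) - (1 - α) • (walkMatrix G)ᵀ with hM
  have hMπ : ∀ t : V, M *ᵥ π t = α • (Pi.single t 1 : V → ℝ) := by
    intro t
    rw [hM, M_mulVec]
    nth_rewrite 1 [hπ t]
    abel
  have hrsum : ∑ x : V, r x • (Pi.single x 1 : V → ℝ) = r := by
    funext w
    simp [Pi.single_apply, Finset.sum_ite_eq]
  constructor
  · intro h
    have hfun : π s = p + ∑ x : V, r x • π x := by
      funext w
      simpa [Finset.sum_apply] using h w
    have := hMπ s
    rw [hfun] at this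
    rw [Matrix.mulVec_add] at this
    have hsum : M *ᵥ (∑ x : V, r x • π x) = ∑ x : V, r x • (M *ᵥ π x) := by
      rw [← Matrix.mulVecLin_apply, map_sum]
      simp [Matrix.mulVecLin_apply]
    rw [hsum] at this
    simp only [hMπ] at this
    have : M *ᵥ p + α • r = α • (Pi.single s 1 : V → ℝ) := by
      rw [← this]
      congr 1
      rw [show (∑ x : V, r x • (α • (Pi.single x 1 : V → ℝ)))
            = α • ∑ x : V, r x • (Pi.single x 1 : V → ℝ) from by
        rw [Finset.smul_sum]; exact Finset.sum_congr rfl fun x _ => smul_comm _ _ _]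
      rw [hrsum]
    rw [smul_sub]
    linear_combination (norm := module) -this
  · intro h
    have key : M *ᵥ (π s - (p + ∑ x : V, r x • π x)) = 0 := by
      rw [Matrix.mulVec_sub, Matrix.mulVec_add, hMπ]
      have hsum : M *ᵥ (∑ x : V, r x • π x) = ∑ x : V, r x • (M *ᵥ π x) := by
        rw [← Matrix.mulVecLin_apply, map_sum]
        simp [Matrix.mulVecLin_apply]
      rw [hsum]
      simp only [hMπ]
      have h2 : ∑ x : V, r x • (α • (Pi.single x 1 : V → ℝ)) = α • r := by
        rw [show (∑ x : V, r x • (α • (Pi.single x 1 : V → ℝ)))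
              = α • ∑ x : V, r x • (Pi.single x 1 : V → ℝ) from by
          rw [Finset.smul_sum]; exact Finset.sum_congr rfl fun x _ => smul_comm _ _ _]
        rw [hrsum]
      rw [h2, ← h]
      rw [smul_sub]
      abel
    have := M_inj G hd α hα _ key
    intro w
    have hw := congrFun this w
    simp only [Pi.sub_apply, Pi.add_apply, Pi.zero_apply, sub_eq_zero, Finset.sum_apply,
      Pi.smul_apply, smul_eq_mul] at hw
    exact hw
end

section
/- Edge insertion preserves the ForwardPush invariant under the DynamicSNE update: let u ≠ v be non-adjacent vertices of G and let G' be the graph G with the edge {u,v} inserted, with degree function d' (so d'(u) = d(u)+1, d'(v) = d(v)+1, d'(w) = d(w) otherwise) and personalized PageRank vectors π'_x. Suppose p, r ∈ ℝ^V satisfy π_s(w) = p(w) + Σ_{x∈V} r(x)·π_x(w) for every w ∈ V. Define Δ_u = p(u)/d(u), Δ_v = p(v)/d(v), p' = p + Δ_u·e_u + Δ_v·e_v, and r' equal to r except r'(u) = r(u) − Δ_u/α + (1−α)·Δ_v/α and r'(v) = r(v) − Δ_v/α + (1−α)·Δ_u/α. Then π'_s(w) = p'(w) + Σ_{x∈V}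 r'(x)·π'_x(w) for every w ∈ V. -/
open Matrix

section Aux
variable {V : Type*} [Fintype V] [DecidableEq V]

lemma walkMatrix_apply (G : SimpleGraph V) [DecidableRel G.Adj] (i j : V) :
    walkMatrix G i j = ((G.degree i : ℝ))⁻¹ * (G.adjMatrix ℝ) i j := by
  simp only [walkMatrix, Matrix.diagonal_mul]

lemma walkMatrix_nonneg (G : SimpleGraph V) [DecidableRel G.Adj] (i j : V) :
    0 ≤ walkMatrix G i j := by
  rw [walkMatrix_apply]
  refine mul_nonneg (inv_nonneg.2 (by positivity)) ?_
  simp [SimpleGraph.adjMatrix_apply]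
  split <;> norm_num

lemma walkMatrix_rowSum (G : SimpleGraph V) [DecidableRel G.Adj]
    (hd : ∀ w : V, 0 < G.degree w) (i : V) :
    ∑ j, walkMatrix G i j = 1 := by
  have hdeg : ∑ j, (G.adjMatrix ℝ) i j = (G.degree i : ℝ) := by
    simp [SimpleGraph.adjMatrix_apply, SimpleGraph.degree, Finset.sum_boole,
      SimpleGraph.neighborFinset]
  simp only [walkMatrix_apply, ← Finset.mul_sum, hdeg]
  exact inv_mul_cancel₀ (by exact_mod_cast (hd i).ne')

lemma eigen_zero (G : SimpleGraph V) [DecidableRel G.Adj]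
    (α : ℝ) (hα0 : 0 < α) (hα1 : α < 1)
    (hd : ∀ w : V, 0 < G.degree w) (q : V → ℝ)
    (hq : ∀ w, q w = (1 - α) * ∑ j, walkMatrix G j w * q j) :
    ∀ w, q w = 0 := by
  set S := ∑ w, |q w| with hS
  have hbound : ∀ w, |q w| ≤ (1 - α) * ∑ j, walkMatrix G j w * |q j| := by
    intro w
    rw [hq w, abs_mul, abs_of_nonneg (by linarith : (0:ℝ) ≤ 1 - α)]
    refine mul_le_mul_of_nonneg_left ?_ (by linarith)
    calc |∑ j, walkMatrix G j w * q j| ≤ ∑ j, |walkMatrix G j w * q j| :=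
          Finset.abs_sum_le_sum_abs _ _
      _ = ∑ j, walkMatrix G j w * |q j| := by
          refine Finset.sum_congr rfl fun j _ => ?_
          rw [abs_mul, abs_of_nonneg (walkMatrix_nonneg G j w)]
  have hSle : S ≤ (1 - α) * S := by
    calc S ≤ ∑ w, (1 - α) * ∑ j, walkMatrix G j w * |q j| :=
          Finset.sum_le_sum fun w _ => hbound w
      _ = (1 - α) * ∑ j, (∑ w, walkMatrix G j w) * |q j| := by
          rw [← Finset.mul_sum, Finset.sum_comm]
          congr 1
          refine Finset.sum_congr rfl fun j _ => ?_
          rw [Finset.sum_mul]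
      _ = (1 - α) * S := by
          congr 1
          refine Finset.sum_congr rfl fun j _ => ?_
          rw [walkMatrix_rowSum G hd j, one_mul]
  have hS0 : 0 ≤ S := Finset.sum_nonneg fun w _ => abs_nonneg _
  have : S = 0 := by nlinarith
  intro w
  have := (Finset.sum_eq_zero_iff_of_nonneg (fun w _ => abs_nonneg (q w))).1 this w
    (Finset.mem_univ w)
  exact abs_eq_zero.1 this

lemma ppv_eval (G : SimpleGraph V) [DecidableRel G.Adj] (α : ℝ) (π : V → V → ℝ)
    (hπ : ∀ x : V,
      π x = α • (Pi.single x 1 : V → ℝ) + (1 - α) • ((walkMatrix G)ᵀ *ᵥ π x))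
    (x w : V) :
    π x w = α * (Pi.single x 1 : V → ℝ) w
      + (1 - α) * ∑ j, walkMatrix G j w * π x j := by
  have := congrFun (hπ x) w
  simpa [Matrix.mulVec, dotProduct, Matrix.transpose_apply] using this

lemma core_identity (G : SimpleGraph V) [DecidableRel G.Adj] (α : ℝ) (π : V → V → ℝ)
    (hπ : ∀ x : V,
      π x = α • (Pi.single x 1 : V → ℝ) + (1 - α) • ((walkMatrix G)ᵀ *ᵥ π x))
    (s : V) (p r : V → ℝ) (w : V) :
    (π s w - p w - ∑ x, r x * π x w)
      - (1 - α) * ∑ j, walkMatrix G j w * (π s j - p j - ∑ x, r x * π x j)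
    = α * (Pi.single s 1 : V → ℝ) w - p w - α * r w
      + (1 - α) * ∑ j, walkMatrix G j w * p j := by
  have h1 := ppv_eval G α π hπ s w
  have h2 : ∑ x, r x * π x w
      = α * r w + (1 - α) * ∑ j, walkMatrix G j w * ∑ x, r x * π x j := by
    calc ∑ x, r x * π x w
        = ∑ x, (r x * (α * (Pi.single x 1 : V → ℝ) w)
            + (1 - α) * (r x * ∑ j, walkMatrix G j w * π x j)) := by
          refine Finset.sum_congr rfl fun x _ => ?_
          rw [ppv_eval G α π hπ x w]; ring
      _ = (∑ x, r x * (α * (Pi.single x 1 : V → ℝ) w))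
            + (1 - α) * ∑ x, r x * ∑ j, walkMatrix G j w * π x j := by
          rw [Finset.sum_add_distrib, Finset.mul_sum]
      _ = α * r w + (1 - α) * ∑ j, walkMatrix G j w * ∑ x, r x * π x j := by
          congr 1
          · simp [Pi.single_apply, mul_ite, Finset.sum_ite_eq]
            ring
          · congr 1
            calc ∑ x, r x * ∑ j, walkMatrix G j w * π x j
                = ∑ x, ∑ j, r x * (walkMatrix G j w * π x j) := by
                  simp only [Finset.mul_sum]
              _ = ∑ j, ∑ x, r x * (walkMatrix G j w * π x j) := Finset.sum_comm
              _ = ∑ j, walkMatrix G j w * ∑ x, r x * π x j := by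
                  refine Finset.sum_congr rfl fun j _ => ?_
                  rw [Finset.mul_sum]
                  exact Finset.sum_congr rfl fun x _ => by ring
  have h3 : ∑ j, walkMatrix G j w * (π s j - p j - ∑ x, r x * π x j)
      = (∑ j, walkMatrix G j w * π s j) - (∑ j, walkMatrix G j w * p j)
        - ∑ j, walkMatrix G j w * ∑ x, r x * π x j := by
    rw [← Finset.sum_sub_distrib, ← Finset.sum_sub_distrib]
    refine Finset.sum_congr rfl fun j _ => by ring
  rw [h3, h1, h2]; ring

lemma inv_to_key (G : SimpleGraph V) [DecidableRel G.Adj] (α : ℝ) (π : V → V → ℝ)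
    (hπ : ∀ x : V,
      π x = α • (Pi.single x 1 : V → ℝ) + (1 - α) • ((walkMatrix G)ᵀ *ᵥ π x))
    (s : V) (p r : V → ℝ)
    (hinv : ∀ w : V, π s w = p w + ∑ x : V, r x * π x w) (w : V) :
    α * (Pi.single s 1 : V → ℝ) w
      = p w + α * r w - (1 - α) * ∑ j, walkMatrix G j w * p j := by
  have hc := core_identity G α π hπ s p r w
  have hz : ∀ j, π s j - p j - ∑ x, r x * π x j = 0 := fun j => by
    rw [hinv j]; ring
  rw [hz w] at hc
  have : ∑ j, walkMatrix G j w * (π s j - p j - ∑ x, r x * π x j) = 0 :=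
    Finset.sum_eq_zero fun j _ => by rw [hz j, mul_zero]
  rw [this] at hc
  linarith [hc]

lemma key_to_inv (G : SimpleGraph V) [DecidableRel G.Adj]
    (α : ℝ) (hα0 : 0 < α) (hα1 : α < 1)
    (hd : ∀ w : V, 0 < G.degree w) (π : V → V → ℝ)
    (hπ : ∀ x : V,
      π x = α • (Pi.single x 1 : V → ℝ) + (1 - α) • ((walkMatrix G)ᵀ *ᵥ π x))
    (s : V) (p r : V → ℝ)
    (hkey : ∀ w : V, α * (Pi.single s 1 : V → ℝ) w
      = p w + α * r w - (1 - α) * ∑ j, walkMatrix G j w * p j) (w : V) :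
    π s w = p w + ∑ x : V, r x * π x w := by
  set q : V → ℝ := fun j => π s j - p j - ∑ x, r x * π x j with hqdef
  have hq : ∀ w, q w = (1 - α) * ∑ j, walkMatrix G j w * q j := by
    intro w
    have hc := core_identity G α π hπ s p r w
    have hk := hkey w
    simp only [hqdef]
    linarith [hc]
  have := eigen_zero G α hα0 hα1 hd q hq w
  simp only [hqdef] at this
  linarith [this]

end Aux

/-- Edge insertion preserves the ForwardPush invariant under the DynamicSNE update:
if `G'` is `G` with the (previously absent) edge `{u,v}` inserted, `(p, r)` satisfies the
ForwardPush invariant for `s` on `G`, and with `Δ_u = p(u)/d(u)`, `Δ_v = p(v)/d(v)` we set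
`p' = p + Δ_u·e_u + Δ_v·e_v`, `r'(u) = r(u) − Δ_u/α + (1−α)·Δ_v/α`,
`r'(v) = r(v) − Δ_v/α + (1−α)·Δ_u/α`, and `r'(w) = r(w)` otherwise, then `(p', r')`
satisfies the ForwardPush invariant for `s` on `G'`. -/
theorem edge_insertion_preserves_invariant
    {V : Type*} [Fintype V] [DecidableEq V]
    (G G' : SimpleGraph V) [DecidableRel G.Adj] [DecidableRel G'.Adj]
    (α : ℝ) (hα : α ∈ Set.Ioo (0 : ℝ) 1)
    (u v : V) (huv : u ≠ v) (hnadj : ¬ G.Adj u v)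
    (hG' : ∀ a b : V, G'.Adj a b ↔ G.Adj a b ∨ (a = u ∧ b = v) ∨ (a = v ∧ b = u))
    (hd : ∀ w : V, 0 < G.degree w) (hd' : ∀ w : V, 0 < G'.degree w)
    (π π' : V → V → ℝ)
    (hπ : ∀ x : V,
      π x = α • (Pi.single x 1 : V → ℝ) + (1 - α) • ((walkMatrix G)ᵀ *ᵥ π x))
    (hπ' : ∀ x : V,
      π' x = α • (Pi.single x 1 : V → ℝ) + (1 - α) • ((walkMatrix G')ᵀ *ᵥ π' x))
    (s : V) (p r : V → ℝ)
    (hinv : ∀ w : V, π s w = p w + ∑ x : V, r x * π x w)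
    (Δu Δv : ℝ) (hΔu : Δu = p u / (G.degree u : ℝ)) (hΔv : Δv = p v / (G.degree v : ℝ))
    (p' r' : V → ℝ)
    (hp' : p' = p + Δu • (Pi.single u 1 : V → ℝ) + Δv • (Pi.single v 1 : V → ℝ))
    (hr'u : r' u = r u - Δu / α + (1 - α) * Δv / α)
    (hr'v : r' v = r v - Δv / α + (1 - α) * Δu / α)
    (hr' : ∀ w : V, w ≠ u → w ≠ v → r' w = r w) :
    ∀ w : V, π' s w = p' w + ∑ x : V, r' x * π' x w := by
  obtain ⟨hα0, hα1⟩ := hα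
  have hnadj' : ¬ G.Adj v u := fun h => hnadj h.symm
  -- degree facts
  have hdegu : G'.degree u = G.degree u + 1 := by
    have hn : G'.neighborFinset u = insert v (G.neighborFinset u) := by
      ext x
      simp only [SimpleGraph.mem_neighborFinset, Finset.mem_insert, hG']
      tauto
    rw [← SimpleGraph.card_neighborFinset_eq_degree, hn,
      Finset.card_insert_of_notMem (by
        simpa [SimpleGraph.mem_neighborFinset] using hnadj),
      SimpleGraph.card_neighborFinset_eq_degree]
  have hdegv : G'.degree v = G.degree v + 1 := by
    have hn : G'.neighborFinset v = insert u (G.neighborFinset v) := by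
      ext x
      simp only [SimpleGraph.mem_neighborFinset, Finset.mem_insert, hG']
      tauto
    rw [← SimpleGraph.card_neighborFinset_eq_degree, hn,
      Finset.card_insert_of_notMem (by
        simpa [SimpleGraph.mem_neighborFinset] using hnadj'),
      SimpleGraph.card_neighborFinset_eq_degree]
  have hdego : ∀ j, j ≠ u → j ≠ v → G'.degree j = G.degree j := by
    intro j hju hjv
    have hn : G'.neighborFinset j = G.neighborFinset j := by
      ext x
      simp [SimpleGraph.mem_neighborFinset, hG', hju, hjv]
    rw [← SimpleGraph.card_neighborFinset_eq_degree, hn,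
      SimpleGraph.card_neighborFinset_eq_degree]
  -- adjacency facts
  have hadju : ∀ x, (G'.adjMatrix ℝ) u x
      = if x = v then 1 else (G.adjMatrix ℝ) u x := by
    intro x
    by_cases hx : x = v
    · subst hx
      simp [SimpleGraph.adjMatrix_apply, hG']
    · simp only [SimpleGraph.adjMatrix_apply, hG', hx, if_false]
      simp [huv, hx]
  have hadjv : ∀ x, (G'.adjMatrix ℝ) v x
      = if x = u then 1 else (G.adjMatrix ℝ) v x := by
    intro x
    by_cases hx : x = u
    · subst hx
      simp [SimpleGraph.adjMatrix_apply, hG']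
    · simp only [SimpleGraph.adjMatrix_apply, hG', hx, if_false]
      simp [huv.symm, hx]
  have hadjo : ∀ j x, j ≠ u → j ≠ v → (G'.adjMatrix ℝ) j x = (G.adjMatrix ℝ) j x := by
    intro j x hju hjv
    simp [SimpleGraph.adjMatrix_apply, hG', hju, hjv]
  -- pointwise values of p'
  have hp'app : ∀ x, p' x
      = p x + Δu * (if x = u then 1 else 0) + Δv * (if x = v then 1 else 0) := by
    intro x
    rw [hp']
    simp [Pi.single_apply, mul_comm]
  have hdu0 : (G.degree u : ℝ) ≠ 0 := by exact_mod_cast (hd u).ne'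
  have hdv0 : (G.degree v : ℝ) ≠ 0 := by exact_mod_cast (hd v).ne'
  have hpu : p u = Δu * (G.degree u : ℝ) := by
    rw [hΔu]; field_simp
  have hpv : p v = Δv * (G.degree v : ℝ) := by
    rw [hΔv]; field_simp
  -- key identity transfer
  have hkeyG := inv_to_key G α π hπ s p r hinv
  have hkey' : ∀ w : V, α * (Pi.single s 1 : V → ℝ) w
      = p' w + α * r' w - (1 - α) * ∑ j, walkMatrix G' j w * p' j := by
    intro w
    have hterm : ∀ j, walkMatrix G' j w * p' j - walkMatrix G j w * p j
        = (if j = u then Δu * (if w = v then 1 else 0) else 0)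
          + (if j = v then Δv * (if w = u then 1 else 0) else 0) := by
      intro j
      by_cases hju : j = u
      · rw [hju]
        simp only [if_pos rfl, if_neg huv, add_zero]
        rw [walkMatrix_apply, walkMatrix_apply, hdegu, hp'app, hadju]
        have h1 : ((G.degree u + 1 : ℕ) : ℝ) = (G.degree u : ℝ) + 1 := by push_cast; ring
        rw [h1]
        by_cases hwv : w = v
        · rw [hwv]
          have : (G.adjMatrix ℝ) u v = 0 := by simp [SimpleGraph.adjMatrix_apply, hnadj]
          rw [if_pos rfl, if_pos rfl, this, hpu]
          simp only [if_pos rfl, if_neg huv]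
          field_simp
          simp only [if_true]; ring
        · rw [if_neg hwv, if_neg hwv, hpu]
          simp only [if_pos rfl, if_neg huv]
          field_simp
          simp only [if_true]; ring
      · by_cases hjv : j = v
        · rw [hjv]
          simp only [if_neg (Ne.symm huv), if_pos rfl, zero_add]
          rw [walkMatrix_apply, walkMatrix_apply, hdegv, hp'app, hadjv]
          have h1 : ((G.degree v + 1 : ℕ) : ℝ) = (G.degree v : ℝ) + 1 := by push_cast; ring
          rw [h1]
          by_cases hwu : w = u
          · rw [hwu]
            have : (G.adjMatrix ℝ) v u = 0 := by simp [SimpleGraph.adjMatrix_apply, hnadj']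
            rw [if_pos rfl, if_pos rfl, this, hpv]
            simp only [if_neg huv.symm, if_pos rfl]
            field_simp
            simp only [if_true]; ring
          · rw [if_neg hwu, if_neg hwu, hpv]
            simp only [if_neg huv.symm, if_pos rfl]
            field_simp
            simp only [if_true]; ring
        · simp only [if_neg hju, if_neg hjv, add_zero]
          rw [walkMatrix_apply, walkMatrix_apply, hdego j hju hjv, hadjo j w hju hjv,
            hp'app, if_neg hju, if_neg hjv]
          ring
    have hS : (∑ j, walkMatrix G' j w * p' j) - (∑ j, walkMatrix G j w * p j)
        = Δu * (if w = v then 1 else 0) + Δv * (if w = u then 1 else 0) := by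
      rw [← Finset.sum_sub_distrib]
      calc ∑ j, (walkMatrix G' j w * p' j - walkMatrix G j w * p j)
          = ∑ j, ((if j = u then Δu * (if w = v then 1 else 0) else 0)
              + (if j = v then Δv * (if w = u then 1 else 0) else 0)) :=
            Finset.sum_congr rfl fun j _ => hterm j
        _ = _ := by
            rw [Finset.sum_add_distrib, Finset.sum_ite_eq', Finset.sum_ite_eq']
            simp
    have hk := hkeyG w
    rw [hk]
    have hrs : α * r' w + (p' w - p w) - α * r w
        = (1 - α) * (Δu * (if w = v then 1 else 0) + Δv * (if w = u then 1 else 0)) := by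
      by_cases hwu : w = u
      · subst hwu
        rw [hr'u, hp'app, if_pos rfl, if_neg huv]
        field_simp
        ring
      · by_cases hwv : w = v
        · rw [hwv]
          rw [hr'v, hp'app, if_neg huv.symm, if_pos rfl]
          field_simp
          ring
        · rw [hr' w hwu hwv, hp'app, if_neg hwu, if_neg hwv]
          simp [hwu, hwv]
    linear_combination (1 - α) * hS - hrs
  exact key_to_inv G' α hα0 hα1 hd' π' hπ' s p' r' hkey'
end
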